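/- In the differential ring A = ℂ[u^{(n)} : n ∈ ℤ₊] of differential polynomials in one variable with ∂(u^{(n)}) = u^{(n+1)}, the operators u and ∂ satisfy u·S₁ = ∂·A₁ with A₁ = u², S₁ = u∂ + 2u' ∈ A[∂]; however, there exist no B ∈ A[∂] and monic S ∈ A[∂] with u·S = ∂·B. Consequently, the pseudodifferential operator ∂⁻¹ ∘ u ∈ A((∂⁻¹)) is a left fraction but not a right fraction A S⁻¹ with A ∈ A[∂] and S ∈ A[∂] monic. -/

import Mathlib

/-- An axiomatization of the ring `R((∂⁻¹))` of pseudodifferential operators over a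
commutative differential ring `(R, δ)`: elements are determined by their coefficients
`coeff A : ℤ → R` (supported in a half-line `n ≤ N`), with the product determined by
`∂ⁿ ∘ a = Σ_{j≥0} binom(n,j) δʲ(a) ∂^{n-j}`, equivalently by the symbol formula
`coeff (A∘B) k = Σ_{m+n-j=k} binom(m,j) aₘ δʲ(bₙ)`. -/
structure PseudoDiffOps (R : Type) [CommRing R] (δ : R → R) : Type 1 where
  carrier : Type
  [ringCarrier : Ring carrier]
  /-- the embedding of `R` as the operators of order `≤ 0` with only a constant term -/
  const : R →+* carrier
  /-- the derivation `∂` as an element of the ring -/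
  d : carrier
  /-- the element `∂⁻¹` -/
  dinv : carrier
  δ_add : ∀ a b : R, δ (a + b) = δ a + δ b
  δ_leibniz : ∀ a b : R, δ (a * b) = δ a * b + a * δ b
  /-- `coeff A n` is the coefficient of `∂ⁿ` in `A` -/
  coeff : carrier → ℤ → R
  coeff_injective : Function.Injective coeff
  coeff_add : ∀ A B n, coeff (A + B) n = coeff A n + coeff B n
  coeff_one : ∀ n, coeff 1 n = if n = 0 then 1 else 0
  coeff_const : ∀ (a : R) (n), coeff (const a) n = if n = 0 then a else 0
  coeff_d : ∀ n, coeff d n = if n = 1 then 1 else 0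
  coeff_dinv : ∀ n, coeff dinv n = if n = -1 then 1 else 0
  d_dinv : d * dinv = 1
  dinv_d : dinv * d = 1
  coeff_bddAbove : ∀ A, ∃ N : ℤ, ∀ n, N < n → coeff A n = 0
  exists_of_coeffs : ∀ f : ℤ → R, (∃ N : ℤ, ∀ n, N < n → f n = 0) → ∃ A, coeff A = f
  coeff_mul : ∀ (A B : carrier) (NA NB k : ℤ),
    (∀ n, NA < n → coeff A n = 0) → (∀ n, NB < n → coeff B n = 0) →
    coeff (A * B) k =
      ∑ m ∈ Finset.Icc (k - NB) NA, ∑ j ∈ Finset.range ((NB - k + m).toNat + 1),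
        ((Ring.choose m j : ℤ) : R) * (coeff A m * δ^[j] (coeff B (k + j - m)))

attribute [instance] PseudoDiffOps.ringCarrier

namespace PseudoDiffOps

variable {R : Type} [CommRing R] {δ : R → R} (P : PseudoDiffOps R δ)

/-- the order of a pseudodifferential operator: the largest `n` with `coeff A n ≠ 0`
(junk value for `A = 0`). -/
noncomputable def ord (A : P.carrier) : ℤ := sSup {n : ℤ | P.coeff A n ≠ 0}

/-- the leading coefficient of a pseudodifferential operator -/
noncomputable def leadCoeff (A : P.carrier) : R := P.coeff A (P.ord A)

/-- `A` is a differential operator, i.e. lies in `R[∂] ⊆ R((∂⁻¹))` -/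
def IsDiffOp (A : P.carrier) : Prop := ∀ n : ℤ, n < 0 → P.coeff A n = 0

/-- `A` is monic, i.e. has leading coefficient `1` -/
noncomputable def Monic (A : P.carrier) : Prop := P.leadCoeff A = 1

end PseudoDiffOps

open MvPolynomial

/-- the algebra of differential polynomials `ℂ[u⁽ⁿ⁾ : n ∈ ℤ₊]`, with `u⁽ⁿ⁾ = X n` -/
noncomputable abbrev DPoly : Type := MvPolynomial ℕ ℂ

/-- the derivation `∂` on `ℂ[u⁽ⁿ⁾]`, sending `u⁽ⁿ⁾` to `u⁽ⁿ⁺¹⁾` -/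
noncomputable def dpolyDer : DPoly → DPoly :=
  ⇑(MvPolynomial.mkDerivation ℂ (fun n : ℕ => (X (n + 1) : DPoly)))

namespace PseudoDiffOps

variable {R : Type} [CommRing R] {δ : R → R} (P : PseudoDiffOps R δ)

lemma coeff_zero' (n : ℤ) : P.coeff 0 n = 0 := by
  have h := P.coeff_add 0 0 n
  rw [add_zero] at h
  have h2 : P.coeff 0 n + 0 = P.coeff 0 n + P.coeff 0 n := by rw [add_zero]; exact h
  exact ((add_right_inj _).mp h2).symm

lemma delta_zero (P : PseudoDiffOps R δ) : δ (0 : R) = 0 := by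
  have h := P.δ_add 0 0
  rw [add_zero] at h
  have h2 : δ (0:R) + 0 = δ (0:R) + δ (0:R) := by rw [add_zero]; exact h
  exact ((add_right_inj _).mp h2).symm

lemma coeff_const_mul (a : R) (B : P.carrier) (NB : ℤ)
    (hB : ∀ n, NB < n → P.coeff B n = 0) (k : ℤ) :
    P.coeff (P.const a * B) k = a * P.coeff B k := by
  have hconst : ∀ n, (0:ℤ) < n → P.coeff (P.const a) n = 0 := by
    intro n hn; rw [P.coeff_const]; exact if_neg (by omega)
  rw [P.coeff_mul (P.const a) B 0 NB k hconst hB]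
  by_cases hk : k ≤ NB
  · rw [Finset.sum_eq_single 0]
    · rw [Finset.sum_eq_single 0]
      · simp [P.coeff_const, Ring.choose_zero_right]
      · intro j _ hj
        rw [Ring.choose_zero_ite, if_neg hj]
        simp
      · intro h
        exact absurd (Finset.mem_range.mpr (Nat.succ_pos _)) h
    · intro m _ hm
      rw [Finset.sum_eq_zero]
      intro j _
      rw [P.coeff_const, if_neg hm]
      simp
    · intro h
      exact absurd (Finset.mem_Icc.mpr ⟨by omega, le_refl 0⟩) h
  · rw [Finset.Icc_eq_empty (by omega), Finset.sum_empty, hB k (by omega), mul_zero]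

lemma coeff_d_mul (B : P.carrier) (NB : ℤ)
    (hB : ∀ n, NB < n → P.coeff B n = 0) (k : ℤ) :
    P.coeff (P.d * B) k = P.coeff B (k - 1) + δ (P.coeff B k) := by
  have hd : ∀ n, (1:ℤ) < n → P.coeff P.d n = 0 := by
    intro n hn; rw [P.coeff_d]; exact if_neg (by omega)
  rw [P.coeff_mul P.d B 1 NB k hd hB]
  by_cases hk : k ≤ NB + 1
  · rw [Finset.sum_eq_single 1]
    · by_cases hk2 : k ≤ NB
      · have hsub : Finset.range 2 ⊆ Finset.range ((NB - k + 1).toNat + 1) :=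
          Finset.range_subset_range.mpr (by omega)
        rw [← Finset.sum_subset hsub ?side]
        case side =>
          intro j _ hj
          rw [show (1:ℤ) = ((1:ℕ):ℤ) by norm_num, Ring.choose_natCast,
            Nat.choose_eq_zero_of_lt (by simpa using hj)]
          simp
        rw [Finset.sum_range_succ, Finset.sum_range_one, Ring.choose_zero_right,
          Ring.choose_one_right]
        simp [P.coeff_d]
      · have hke : k = NB + 1 := by omega
        have h0 : (NB - k + 1).toNat = 0 := by omega
        rw [h0, Finset.sum_range_one, Ring.choose_zero_right, hB k (by omega), P.delta_zero,
          add_zero]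
        simp [P.coeff_d]
    · intro m _ hm
      rw [Finset.sum_eq_zero]
      intro j _
      rw [P.coeff_d, if_neg hm]
      simp
    · intro h
      exact absurd (Finset.mem_Icc.mpr ⟨by omega, le_refl 1⟩) h
  · rw [Finset.Icc_eq_empty (by omega), Finset.sum_empty, hB (k-1) (by omega), hB k (by omega),
      P.delta_zero, add_zero]

lemma coeff_dinv_const (a : R) :
    P.coeff (P.dinv * P.const a) (-1) = a := by
  have hdinv : ∀ n, (-1:ℤ) < n → P.coeff P.dinv n = 0 := by
    intro n hn; rw [P.coeff_dinv]; exact if_neg (by omega)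
  have hconst : ∀ n, (0:ℤ) < n → P.coeff (P.const a) n = 0 := by
    intro n hn; rw [P.coeff_const]; exact if_neg (by omega)
  rw [P.coeff_mul P.dinv (P.const a) (-1) 0 (-1) hdinv hconst]
  norm_num [P.coeff_dinv, P.coeff_const]

end PseudoDiffOps

section AuxLinearPart

open MvPolynomial

lemma dpolyDer_add (f g : DPoly) : dpolyDer (f + g) = dpolyDer f + dpolyDer g := by
  simp [dpolyDer]

lemma dpolyDer_mul (f g : DPoly) : dpolyDer (f * g) = dpolyDer f * g + f * dpolyDer g := by
  simp [dpolyDer, Derivation.leibniz]; ring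

lemma dpolyDer_X (n : ℕ) : dpolyDer (X n) = X (n + 1) := by
  simp [dpolyDer]

lemma dpolyDer_C (a : ℂ) : dpolyDer (C a) = 0 := by
  simp [dpolyDer, MvPolynomial.C_eq_smul_one]

noncomputable def lpart (m : ℕ) (f : DPoly) : ℂ := MvPolynomial.coeff (Finsupp.single m 1) f

lemma lpart_add (m : ℕ) (f g : DPoly) : lpart m (f + g) = lpart m f + lpart m g :=
  MvPolynomial.coeff_add _ _ _

lemma lpart_zero (m : ℕ) : lpart m 0 = 0 := MvPolynomial.coeff_zero _

lemma lpart_X (m n : ℕ) : lpart m (X n) = if n = m then 1 else 0 := by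
  rw [lpart, MvPolynomial.coeff_X']
  simp [Finsupp.single_eq_single_iff]

lemma lpart_C (m : ℕ) (a : ℂ) : lpart m (C a) = 0 := by
  rw [lpart, MvPolynomial.coeff_C, if_neg]
  intro h
  exact one_ne_zero (Finsupp.single_eq_zero.mp h.symm)

lemma lpart_mul (m : ℕ) (f g : DPoly) :
    lpart m (f * g) = constantCoeff f * lpart m g + lpart m f * constantCoeff g := by
  rw [lpart, MvPolynomial.coeff_mul, Finsupp.antidiagonal_single, Finset.sum_map,
    Finset.Nat.antidiagonal_succ]
  rw [Finset.sum_cons, Finset.Nat.antidiagonal_zero, Finset.sum_map, Finset.sum_singleton]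
  simp [Prod.map, lpart, constantCoeff_eq]

lemma constantCoeff_dpolyDer (f : DPoly) : constantCoeff (dpolyDer f) = 0 := by
  induction f using MvPolynomial.induction_on with
  | C a => rw [dpolyDer_C]; simp
  | add p q hp hq => rw [dpolyDer_add, map_add, hp, hq, add_zero]
  | mul_X p n hp => rw [dpolyDer_mul, dpolyDer_X, map_add, map_mul, map_mul]; simp

lemma lpart_zero_dpolyDer (f : DPoly) : lpart 0 (dpolyDer f) = 0 := by
  induction f using MvPolynomial.induction_on with
  | C a => rw [dpolyDer_C, lpart_zero]
  | add p q hp hq => rw [dpolyDer_add, lpart_add, hp, hq, add_zero]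
  | mul_X p n hp =>
    rw [dpolyDer_mul, dpolyDer_X, lpart_add, lpart_mul, lpart_mul, constantCoeff_dpolyDer,
      lpart_X, lpart_X]
    simp

lemma lpart_succ_dpolyDer (m : ℕ) (f : DPoly) : lpart (m + 1) (dpolyDer f) = lpart m f := by
  induction f using MvPolynomial.induction_on with
  | C a => rw [dpolyDer_C, lpart_zero, lpart_C]
  | add p q hp hq => rw [dpolyDer_add, lpart_add, lpart_add, hp, hq]
  | mul_X p n hp =>
    rw [dpolyDer_mul, dpolyDer_X, lpart_add, lpart_mul, lpart_mul, lpart_mul,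
      constantCoeff_dpolyDer, lpart_X, lpart_X, lpart_X]
    simp only [constantCoeff_X, mul_zero, zero_mul, add_zero, zero_add]
    by_cases h : n = m <;> simp [h]

end AuxLinearPart

/-- in `A[∂]` with `A = ℂ[u⁽ⁿ⁾]`, one has `u·S₁ = ∂·A₁` for
`A₁ = u²`, `S₁ = u∂ + 2u'`; but there are no `B ∈ A[∂]` and monic `S ∈ A[∂]` with
`u·S = ∂·B`.  Consequently `∂⁻¹∘u ∈ A((∂⁻¹))` is a left fraction but not a right
fraction `A S⁻¹` with `A ∈ A[∂]` and `S ∈ A[∂]` monic. -/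
theorem dpoly_left_fraction_not_right_fraction (P : PseudoDiffOps DPoly dpolyDer) :
    (P.const (X 0) * (P.const (X 0) * P.d + P.const (2 * X 1)) =
      P.d * P.const (X 0 ^ 2)) ∧
    (¬ ∃ B S : P.carrier, P.IsDiffOp B ∧ P.IsDiffOp S ∧ P.Monic S ∧
      P.const (X 0) * S = P.d * B) ∧
    (∃ S A : P.carrier, P.IsDiffOp S ∧ P.IsDiffOp A ∧ S ≠ 0 ∧
      P.dinv * P.const (X 0) = Ring.inverse S * A) ∧
    (¬ ∃ A S : P.carrier, P.IsDiffOp A ∧ P.IsDiffOp S ∧ P.Monic S ∧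
      P.dinv * P.const (X 0) = A * Ring.inverse S) := by

  have hd_bdd : ∀ n, (1:ℤ) < n → P.coeff P.d n = 0 := by
    intro n hn; rw [P.coeff_d]; exact if_neg (by omega)
  -- the key nonexistence statement (second conjunct)
  have hno : ¬ ∃ B S : P.carrier, P.IsDiffOp B ∧ P.IsDiffOp S ∧ P.Monic S ∧
      P.const (X 0) * S = P.d * B := by
    rintro ⟨B, S, hB, hS, hM, heq⟩
    obtain ⟨NB, hNB⟩ := P.coeff_bddAbove B
    obtain ⟨NS, hNS⟩ := P.coeff_bddAbove S
    have hsN : P.coeff S (P.ord S) = 1 := hM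
    set N := P.ord S with hN
    have hN0 : 0 ≤ N := by
      by_contra h
      push_neg at h
      exact one_ne_zero (hsN ▸ hS _ h)
    have key : ∀ k : ℤ, (X 0 : DPoly) * P.coeff S k
        = P.coeff B (k-1) + dpolyDer (P.coeff B k) := by
      intro k
      have h := congrArg (fun T => P.coeff T k) heq
      rwa [P.coeff_const_mul (X 0) S NS hNS k, P.coeff_d_mul B NB hNB k] at h
    have R0 : lpart 0 (P.coeff B (N - 1)) = 1 := by
      have h := congrArg (lpart 0) (key N)
      rw [hsN, mul_one, lpart_add, lpart_zero_dpolyDer, add_zero, lpart_X] at h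
      simpa using h.symm
    have Rstep : ∀ (k : ℤ) (m : ℕ),
        lpart (m+1) (P.coeff B (k-1)) = - lpart m (P.coeff B k) := by
      intro k m
      have h := congrArg (lpart (m+1)) (key k)
      rw [lpart_mul, lpart_add, lpart_succ_dpolyDer, lpart_X] at h
      simp only [constantCoeff_X, zero_mul, Nat.zero_ne_add_one, if_neg, mul_zero,
        add_zero] at h
      have h' : (0:ℂ) = lpart (m+1) (P.coeff B (k-1)) + lpart m (P.coeff B k) := by
        simpa using h
      exact eq_neg_of_add_eq_zero_left h'.symm
    have main : ∀ j : ℕ, lpart j (P.coeff B (N - 1 - j)) = (-1:ℂ)^j := by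
      intro j
      induction j with
      | zero => simpa using R0
      | succ j ih =>
        have h := Rstep (N - 1 - j) j
        have harg : (N - 1 - (j:ℤ)) - 1 = N - 1 - ((j:ℕ)+1:ℕ) := by push_cast; ring
        rw [harg] at h
        rw [h, ih]
        ring
    have hfin := main (N+1).toNat
    have hcast : ((N+1).toNat : ℤ) = N + 1 := Int.toNat_of_nonneg (by omega)
    rw [show N - 1 - ((N+1).toNat : ℤ) = -2 by omega, hB (-2) (by norm_num),
      lpart_zero] at hfin
    exact pow_ne_zero _ (by norm_num : (-1:ℂ) ≠ 0) hfin.symm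
  refine ⟨?_, hno, ?_, ?_⟩
  · -- u·S₁ = ∂·A₁
    apply P.coeff_injective
    funext k
    have hBd : ∀ n, (1:ℤ) < n →
        P.coeff (P.const (X 0) * P.d + P.const (2 * X 1)) n = 0 := by
      intro n hn
      rw [P.coeff_add, P.coeff_const_mul (X 0) P.d 1 hd_bdd n, P.coeff_d, P.coeff_const,
        if_neg (by omega : ¬ n = 1), if_neg (by omega : ¬ n = 0), mul_zero, add_zero]
    have hc2 : ∀ n, (0:ℤ) < n → P.coeff (P.const ((X 0:DPoly) ^ 2)) n = 0 := by
      intro n hn; rw [P.coeff_const]; exact if_neg (by omega)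
    rw [P.coeff_const_mul _ _ 1 hBd k, P.coeff_d_mul _ 0 hc2 k, P.coeff_add,
      P.coeff_const_mul (X 0) P.d 1 hd_bdd k, P.coeff_d, P.coeff_const, P.coeff_const,
      P.coeff_const]
    have hδ2 : dpolyDer ((X 0:DPoly) ^ 2) = 2 * (X 0 * X 1) := by
      rw [pow_two, dpolyDer_mul, dpolyDer_X]; ring
    have hδ0 : dpolyDer (0 : DPoly) = 0 := by
      simpa using dpolyDer_C 0
    split_ifs with h1 h0 h0' <;>
      first
        | (exfalso; omega)
        | (simp only [hδ2, hδ0]; ring)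
  · -- left fraction
    refine ⟨P.d, P.const (X 0), ?_, ?_, ?_, ?_⟩
    · intro n hn; rw [P.coeff_d]; exact if_neg (by omega)
    · intro n hn; rw [P.coeff_const]; exact if_neg (by omega)
    · intro h
      have h1 := congrArg (fun T => P.coeff T 1) h
      rw [P.coeff_d, if_pos rfl, P.coeff_zero'] at h1
      exact one_ne_zero h1
    · have hU : Ring.inverse P.d = P.dinv := by
        have := Ring.inverse_unit (⟨P.d, P.dinv, P.d_dinv, P.dinv_d⟩ : P.carrierˣ)
        simpa using this
      rw [hU]
  · -- not a right fraction
    rintro ⟨A, S, hA, hS, hM, heq⟩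
    by_cases hu : IsUnit S
    · apply hno
      refine ⟨A, S, hA, hS, hM, ?_⟩
      have h1 : P.dinv * P.const (X 0) * S = A := by
        rw [heq, mul_assoc, Ring.inverse_mul_cancel _ hu, mul_one]
      have h2 : P.d * (P.dinv * P.const (X 0) * S) = P.d * A := congrArg _ h1
      rw [mul_assoc, ← mul_assoc, ← mul_assoc, P.d_dinv, one_mul] at h2
      exact h2
    · rw [Ring.inverse_non_unit _ hu, mul_zero] at heq
      have h1 := congrArg (fun T => P.coeff T (-1)) heq
      rw [P.coeff_dinv_const, P.coeff_zero'] at h1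
      exact MvPolynomial.X_ne_zero 0 h1
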